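/- Suppose U : ℝᵈ → ℝ is twice continuously differentiable with L-Lipschitz gradient, its Hessian is uniformly bounded in operator norm by a constant ϖ, U is coercive (U(q) → ∞ as ‖q‖ → ∞), U is a Morse function (every critical point of U has nondegenerate Hessian), and U satisfies the Polyak–Łojasiewicz condition: there exists μ > 0 such that ‖∇U(q)‖² ≥ μ (U(q) − U(q*)) for every q ∈ ℝᵈ and every critical point q* of U. Let S = {(q*, 0) ∈ ℝᵈ × ℝᵈ : ∇U(q*) = 0}. Then there exists a constant λ > 0, depending only on U, Σ, and γ, such that for every T > 0 and every curve z : [0, T] → ℝᵈ × ℝᵈ with z(0) = z₀ that satisfies the amplifying (repelling) dynamics on [0, T/2] and the conformal (attracting) dynamics on [T/2, T], the energy drift is bounded as |H(z(T)) − H(z₀)| ≤ (inf_{u,v ∈ S} |2 H(z(T/2)) − H(u) − H(v)|) · e^{−λ T / 2} + sup_{u,v ∈ S} |H(u) − H(v)|. -/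

import Mathlib

open Matrix

open InnerProductSpace Set

set_option maxHeartbeats 1000000

noncomputable section

/-- Action of a matrix on a vector in Euclidean space. -/
def mvec {d : ℕ} (A : Matrix (Fin d) (Fin d) ℝ) (p : EuclideanSpace ℝ (Fin d)) :
    EuclideanSpace ℝ (Fin d) :=
  WithLp.toLp 2 (A.mulVec p)

/-- The Hamiltonian `H(q, p) = U(q) + (1/2) pᵀ Σ⁻¹ p`, here `Sinv` denotes `Σ⁻¹`. -/
def Ham {d : ℕ} (U : EuclideanSpace ℝ (Fin d) → ℝ) (Sinv : Matrix (Fin d) (Fin d) ℝ)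
    (q p : EuclideanSpace ℝ (Fin d)) : ℝ :=
  U q + (1 / 2) * (p ⬝ᵥ mvec Sinv p)

/-- The critical set `S = {(q*, 0) : ∇U(q*) = 0}` of the Hamiltonian. -/
def critSet {d : ℕ} (U : EuclideanSpace ℝ (Fin d) → ℝ) :
    Set (EuclideanSpace ℝ (Fin d) × EuclideanSpace ℝ (Fin d)) :=
  {w | gradient U w.1 = 0 ∧ w.2 = 0}

def matCLM {d : ℕ} (M : Matrix (Fin d) (Fin d) ℝ) :
    EuclideanSpace ℝ (Fin d) →L[ℝ] EuclideanSpace ℝ (Fin d) :=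
  LinearMap.toContinuousLinearMap (Matrix.toEuclideanLin M)

lemma matCLM_apply {d : ℕ} (M : Matrix (Fin d) (Fin d) ℝ) (x : EuclideanSpace ℝ (Fin d)) :
    matCLM M x = mvec M x := rfl

lemma inner_eq_dot {d : ℕ} (x y : EuclideanSpace ℝ (Fin d)) :
    (inner ℝ x y : ℝ) = x ⬝ᵥ y := by
  simp [PiLp.inner_apply, dotProduct, RCLike.inner_apply, mul_comm]

lemma fderiv_apply_eq_inner_gradient {d : ℕ} (U : EuclideanSpace ℝ (Fin d) → ℝ)
    (y w : EuclideanSpace ℝ (Fin d)) :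
    fderiv ℝ U y w = (inner ℝ (gradient U y) w : ℝ) := by
  show fderiv ℝ U y w = (inner ℝ ((toDual ℝ _).symm (fderiv ℝ U y)) w : ℝ)
  rw [toDual_symm_apply]

lemma contDiff_gradient {d : ℕ} {U : EuclideanSpace ℝ (Fin d) → ℝ} (hU : ContDiff ℝ 2 U) :
    ContDiff ℝ 1 (gradient U) := by
  have h1 : ContDiff ℝ 1 (fderiv ℝ U) := hU.fderiv_right (by norm_num)
  exact ((toDual ℝ (EuclideanSpace ℝ (Fin d))).symm.contDiff).comp h1

lemma matCLM_symm {d : ℕ} {M : Matrix (Fin d) (Fin d) ℝ} (hM : M.IsSymm)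
    (x y : EuclideanSpace ℝ (Fin d)) :
    (inner ℝ (matCLM M x) y : ℝ) = inner ℝ x (matCLM M y) := by
  rw [inner_eq_dot, inner_eq_dot, matCLM_apply, matCLM_apply]
  show (M *ᵥ x) ⬝ᵥ y = x ⬝ᵥ (M *ᵥ y)
  rw [Matrix.dotProduct_mulVec, ← Matrix.mulVec_transpose, hM, dotProduct_comm]

lemma decay_of_deriv_le {a b lam : ℝ} {L L' : ℝ → ℝ} (hab : a ≤ b)
    (hL : ∀ t ∈ Set.Icc a b, HasDerivWithinAt L (L' t) (Set.Icc a b) t)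
    (hle : ∀ t ∈ Set.Icc a b, L' t ≤ -lam * L t) :
    L b ≤ L a * Real.exp (-lam * (b - a)) := by
  set F : ℝ → ℝ := fun t => L t * Real.exp (lam * (t - a)) with hF
  have hFd : ∀ t ∈ Set.Icc a b, HasDerivWithinAt F
      (L' t * Real.exp (lam * (t - a)) + L t * (Real.exp (lam * (t - a)) * lam))
      (Set.Icc a b) t := by
    intro t ht
    have h0 : HasDerivWithinAt (fun s : ℝ => lam * (s - a)) lam (Set.Icc a b) t := by
      simpa using ((hasDerivWithinAt_id t (Set.Icc a b)).sub_const a).const_mul lam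
    exact (hL t ht).mul h0.exp
  have hanti : AntitoneOn F (Set.Icc a b) := by
    apply antitoneOn_of_hasDerivWithinAt_nonpos (convex_Icc a b)
    · intro t ht; exact (hFd t ht).continuousWithinAt
    · intro t ht
      exact ((hFd t (interior_subset ht)).mono interior_subset)
    · intro t ht
      have h1 := hle t (interior_subset ht)
      have h2 : (0:ℝ) < Real.exp (lam * (t - a)) := Real.exp_pos _
      nlinarith
  have hFb := hanti (Set.left_mem_Icc.2 hab) (Set.right_mem_Icc.2 hab) hab
  have hFa : F a = L a := by simp [hF]
  have hFbv : F b = L b * Real.exp (lam * (b - a)) := rfl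
  rw [hFa, hFbv] at hFb
  have h2 : (0:ℝ) < Real.exp (lam * (b - a)) := Real.exp_pos _
  have h3 : Real.exp (-lam * (b - a)) = (Real.exp (lam * (b-a)))⁻¹ := by
    rw [← Real.exp_neg]; ring_nf
  rw [h3, mul_comm (L a), ← div_eq_inv_mul, le_div_iff₀ h2]
  linarith

lemma posdef_dot_pos {d : ℕ} {M : Matrix (Fin d) (Fin d) ℝ} (hM : M.PosDef)
    {x : EuclideanSpace ℝ (Fin d)} (hx : x ≠ 0) :
    0 < (inner ℝ x (matCLM M x) : ℝ) := by
  rw [inner_eq_dot, matCLM_apply]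
  have := hM.dotProduct_mulVec_pos (x := x.ofLp) (by simpa using hx)
  simpa [mvec] using this

lemma posdef_lower {d : ℕ} (hd : 1 ≤ d) {M : Matrix (Fin d) (Fin d) ℝ} (hM : M.PosDef) :
    ∃ α > (0:ℝ), ∀ p : EuclideanSpace ℝ (Fin d),
      α * ‖p‖^2 ≤ (inner ℝ p (matCLM M p) : ℝ) := by
  have hcont : Continuous fun p : EuclideanSpace ℝ (Fin d) => (inner ℝ p (matCLM M p) : ℝ) :=
    continuous_id.inner (matCLM M).continuous
  have hne : (Metric.sphere (0 : EuclideanSpace ℝ (Fin d)) 1).Nonempty := by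
    refine ⟨EuclideanSpace.single ⟨0, hd⟩ (1:ℝ), ?_⟩
    simp [EuclideanSpace.norm_single]
  obtain ⟨p₀, hp₀s, hmin⟩ := (isCompact_sphere (0 : EuclideanSpace ℝ (Fin d)) 1).exists_isMinOn
    hne hcont.continuousOn
  have hp₀n : ‖p₀‖ = 1 := by simpa using hp₀s
  have hp₀ : p₀ ≠ 0 := by intro h; rw [h] at hp₀n; simp at hp₀n
  refine ⟨inner ℝ p₀ (matCLM M p₀), posdef_dot_pos hM hp₀, fun p => ?_⟩
  rcases eq_or_ne p 0 with rfl | hp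
  · simp
  · have hnp : (0:ℝ) < ‖p‖ := norm_pos_iff.2 hp
    set u : EuclideanSpace ℝ (Fin d) := ‖p‖⁻¹ • p with hu
    have hun : ‖u‖ = 1 := by
      rw [hu, norm_smul]; simp [abs_of_pos hnp, inv_mul_cancel₀ hnp.ne']
    have hmem : u ∈ Metric.sphere (0 : EuclideanSpace ℝ (Fin d)) 1 := by
      simpa using hun
    have hmin' : (inner ℝ p₀ (matCLM M p₀) : ℝ) ≤ inner ℝ u (matCLM M u) := hmin hmem
    have hpu : p = ‖p‖ • u := by
      rw [hu, smul_smul, mul_inv_cancel₀ hnp.ne', one_smul]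
    have hexp : (inner ℝ p (matCLM M p) : ℝ) = ‖p‖^2 * inner ℝ u (matCLM M u) := by
      conv_lhs => rw [hpu]
      rw [(matCLM M).map_smul, real_inner_smul_left, real_inner_smul_right]
      ring
    rw [hexp]
    have h2 : (0:ℝ) ≤ ‖p‖^2 := sq_nonneg _
    nlinarith

lemma descent_lemma {d : ℕ} {U : EuclideanSpace ℝ (Fin d) → ℝ} (hU : ContDiff ℝ 2 U)
    {κ : ℝ} (hκ : 0 < κ)
    (hlip : ∀ x y, ‖gradient U x - gradient U y‖ ≤ κ * ‖x - y‖)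
    {c : ℝ} (hc : ∀ y, c ≤ U y) (x : EuclideanSpace ℝ (Fin d)) :
    ‖gradient U x‖^2 ≤ 2 * κ * (U x - c) := by
  have hUdiff : Differentiable ℝ U := hU.differentiable (by norm_num)
  have hgradU : ∀ y w : EuclideanSpace ℝ (Fin d), fderiv ℝ U y w = (inner ℝ (gradient U y) w : ℝ) := by
    intro y w
    show fderiv ℝ U y w = (inner ℝ ((toDual ℝ _).symm (fderiv ℝ U y)) w : ℝ)
    rw [toDual_symm_apply]
  set G := gradient U x with hG
  set v : EuclideanSpace ℝ (Fin d) := -(κ⁻¹ • G) with hv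
  set c1 : ℝ := inner ℝ G v with hc1
  set c2 : ℝ := κ * ‖v‖^2 with hc2
  set ψ : ℝ → ℝ := fun t => U (x + t • v) - (t * c1 + c2 * (t^2/2)) with hψ
  have hline : ∀ t : ℝ, HasDerivAt (fun s : ℝ => x + s • v) v t := by
    intro t
    simpa using ((hasDerivAt_id t).smul_const v).const_add x
  have hψd : ∀ t : ℝ, HasDerivAt ψ
      ((inner ℝ (gradient U (x + t • v)) v : ℝ) - (c1 + c2 * t)) t := by
    intro t
    have h1 : HasDerivAt (fun s : ℝ => U (x + s • v))
        ((inner ℝ (gradient U (x + t • v)) v : ℝ)) t := by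
      have := (hUdiff (x + t • v)).hasFDerivAt.comp_hasDerivAt t (hline t)
      rwa [hgradU] at this
    have l1 : HasDerivAt (fun s : ℝ => s * c1) c1 t := by
      simpa using (hasDerivAt_id t).mul_const c1
    have l2 : HasDerivAt (fun s : ℝ => s^2/2) t t := by
      have h := HasDerivAt.div_const (hasDerivAt_pow 2 t) (2:ℝ)
      norm_num at h
      exact h
    have l3 := l2.const_mul c2
    exact h1.sub (l1.add l3)
  have hanti : AntitoneOn ψ (Set.Icc 0 1) := by
    apply antitoneOn_of_hasDerivWithinAt_nonpos (convex_Icc 0 1)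
    · intro t _; exact (hψd t).continuousAt.continuousWithinAt
    · intro t _; exact ((hψd t).hasDerivWithinAt)
    · intro t ht
      rw [interior_Icc] at ht
      have hdiff : (inner ℝ (gradient U (x + t • v)) v : ℝ) - c1 =
          inner ℝ (gradient U (x + t • v) - G) v := by
        rw [hc1, inner_sub_left]
      have hCS : (inner ℝ (gradient U (x + t • v) - G) v : ℝ) ≤
          ‖gradient U (x + t • v) - G‖ * ‖v‖ := real_inner_le_norm _ _
      have hL : ‖gradient U (x + t • v) - G‖ ≤ κ * (t * ‖v‖) := by
        have := hlip (x + t • v) x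
        simpa [norm_smul, abs_of_pos ht.1, mul_comm] using this
      have hv0 : (0:ℝ) ≤ ‖v‖ := norm_nonneg _
      have : (inner ℝ (gradient U (x + t • v)) v : ℝ) - c1 ≤ c2 * t := by
        rw [hdiff]
        calc (inner ℝ (gradient U (x + t • v) - G) v : ℝ) ≤
            ‖gradient U (x + t • v) - G‖ * ‖v‖ := hCS
          _ ≤ (κ * (t * ‖v‖)) * ‖v‖ := by
              apply mul_le_mul_of_nonneg_right hL hv0
          _ = c2 * t := by rw [hc2]; ring
      linarith
  have h01 : (0:ℝ) ≤ 1 := by norm_num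
  have hψ10 : ψ 1 ≤ ψ 0 := hanti (Set.left_mem_Icc.2 h01) (Set.right_mem_Icc.2 h01) h01
  have hψ0 : ψ 0 = U x := by simp [hψ]
  have hψ1 : ψ 1 = U (x + v) - (c1 + c2/2) := by simp [hψ]; ring
  have hc1v : c1 = -(κ⁻¹ * ‖G‖^2) := by
    rw [hc1, hv, inner_neg_right, real_inner_smul_right, real_inner_self_eq_norm_sq]
  have hc2v : c2 = κ⁻¹ * ‖G‖^2 := by
    rw [hc2, hv, norm_neg, norm_smul]
    have : |κ⁻¹| = κ⁻¹ := abs_of_pos (inv_pos.2 hκ)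
    rw [Real.norm_eq_abs, this, mul_pow]
    field_simp
  have hcle : c ≤ U (x + v) := hc _
  have hinv : κ * κ⁻¹ = 1 := mul_inv_cancel₀ hκ.ne'
  rw [hψ0, hψ1, hc1v, hc2v] at hψ10
  nlinarith [hψ10, hcle]

lemma scalar_cmp {eps kap alpha uu m n Q g : ℝ} (heps : 0 < eps) (hek : eps*kap ≤ 1/4)
    (hea : eps ≤ alpha/4) (hm0 : 0 ≤ m) (hn0 : 0 ≤ n) (huu : 0 ≤ uu)
    (hdesc : m^2 ≤ 2*kap*uu) (hQa : alpha*n^2 ≤ Q) (hg : |g| ≤ m*n) :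
    |eps * g| ≤ (1/4) * (uu + (1/2) * Q) := by
  rw [abs_mul, abs_of_pos heps]
  have h1 : eps * |g| ≤ eps * (m*n) := mul_le_mul_of_nonneg_left hg heps.le
  have h2 : eps * (m*n) ≤ (eps/2)*m^2 + (eps/2)*n^2 := by
    nlinarith [mul_nonneg heps.le (sq_nonneg (m - n))]
  have h3 : (eps/2)*m^2 ≤ (1/4)*uu := by nlinarith
  have h4 : (eps/2)*n^2 ≤ (1/8)*Q := by nlinarith [sq_nonneg n]
  linarith

lemma scalar_key {gam alpha bet eps mu pw kap lam1 lam0 uu m n Q g dd : ℝ}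
    (hgam : 0 < gam) (halpha : 0 < alpha) (hbet : 0 < bet) (heps : 0 < eps)
    (hmu : 0 < mu) (hpw : 0 ≤ pw) (hkap : 0 < kap)
    (he1 : eps * (pw*bet + gam^2/2 + 1) ≤ gam*alpha/2)
    (hek : eps*kap ≤ 1/4) (hea : eps ≤ alpha/4)
    (hlam1a : lam1 ≤ gam*alpha/bet) (hlam1b : lam1 ≤ eps*mu/2) (hlam1 : 0 < lam1)
    (hlam0 : lam0 = (4/5)*lam1)
    (hm0 : 0 ≤ m) (hn0 : 0 ≤ n) (huu : 0 ≤ uu)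
    (hQa : alpha*n^2 ≤ Q) (hQb : Q ≤ bet*n^2)
    (hg : |g| ≤ m*n) (hPLx : mu*uu ≤ m^2) (hdd : dd ≤ pw*bet*n^2)
    (hdesc : m^2 ≤ 2*kap*uu) :
    -gam * Q + eps * (dd - m^2 - gam * g) ≤
      -lam0 * ((uu + (1/2) * Q) + eps * g) := by
  have hQ0 : 0 ≤ Q := le_trans (by positivity) hQa
  have step1 : -gam * Q + eps * (dd - m^2 - gam * g) ≤ -(gam*alpha/2) * n^2 - (eps/2) * m^2 := by
    have e1 : -gam * Q ≤ -gam * (alpha * n^2) := by nlinarith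
    have e2 : eps * dd ≤ eps * (pw * bet * n^2) := mul_le_mul_of_nonneg_left hdd heps.le
    have e3 : -(eps * gam * g) ≤ eps * gam * (m * n) := by
      nlinarith [mul_nonneg heps.le hgam.le, neg_abs_le g, abs_nonneg g]
    have e4 : eps * gam * (m*n) ≤ (eps/2) * m^2 + (eps/2) * gam^2 * n^2 := by
      nlinarith [mul_nonneg heps.le (sq_nonneg (m - gam*n))]
    have e5 : eps * (pw*bet) + eps * (gam^2/2) ≤ gam*alpha/2 := by nlinarith
    have e6 := mul_le_mul_of_nonneg_right e5 (sq_nonneg n)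
    nlinarith
  have step2 : -(gam*alpha/2) * n^2 - (eps/2) * m^2 ≤ -lam1 * (uu + (1/2)*Q) := by
    have f1 : lam1 * ((1/2)*Q) ≤ (gam*alpha/2) * n^2 := by
      have h2 : gam*alpha/bet*bet = gam*alpha := div_mul_cancel₀ _ hbet.ne'
      have h3 : lam1 * Q ≤ (gam*alpha/bet) * Q := mul_le_mul_of_nonneg_right hlam1a hQ0
      have h4 : (gam*alpha/bet) * Q ≤ (gam*alpha/bet) * (bet * n^2) :=
        mul_le_mul_of_nonneg_left hQb (by positivity)
      nlinarith
    have f2 : lam1 * uu ≤ (eps/2) * m^2 := by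
      have h2 : lam1 * uu ≤ (eps*mu/2) * uu := mul_le_mul_of_nonneg_right hlam1b huu
      nlinarith
    linarith
  have step3 : -lam1 * (uu + (1/2)*Q) ≤ -lam0 * ((uu + (1/2)*Q) + eps * g) := by
    have hH0 : 0 ≤ uu + (1/2)*Q := by linarith
    have hcmp' : |eps * g| ≤ (1/4) * (uu + (1/2) * Q) :=
      scalar_cmp heps hek hea hm0 hn0 huu hdesc hQa hg
    have habs := abs_le.mp hcmp'
    have h1 : lam0 * ((uu + (1/2)*Q) + eps*g) ≤ lam0 * ((5/4) * (uu + (1/2)*Q)) := by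
      apply mul_le_mul_of_nonneg_left _ (by rw [hlam0]; positivity)
      linarith
    nlinarith [hlam1.le]
  linarith

/-- Hypocoercive exponential decay of the energy along the conformal dynamics. -/
lemma decay_exists {d : ℕ} (hd : 1 ≤ d) {γ : ℝ} (hγ : 0 < γ)
    {U : EuclideanSpace ℝ (Fin d) → ℝ} (hU : ContDiff ℝ 2 U)
    {κ : ℝ} (hκ : 0 < κ)
    (hlip : ∀ x y, ‖gradient U x - gradient U y‖ ≤ κ * ‖x - y‖)
    {ϖ : ℝ} (hhess : ∀ x, ‖fderiv ℝ (gradient U) x‖ ≤ ϖ)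
    {μ : ℝ} (hμ : 0 < μ)
    {M : Matrix (Fin d) (Fin d) ℝ} (hMs : M.IsSymm) (hMpd : M.PosDef)
    {c : ℝ} (hc : ∀ y, c ≤ U y)
    (hPL : ∀ x, μ * (U x - c) ≤ ‖gradient U x‖^2) :
    ∃ lam0 > (0:ℝ), ∀ a b : ℝ, a ≤ b → ∀ q p : ℝ → EuclideanSpace ℝ (Fin d),
      (∀ t ∈ Set.Icc a b, HasDerivWithinAt q (mvec M (p t)) (Set.Icc a b) t) →
      (∀ t ∈ Set.Icc a b, HasDerivWithinAt p (-gradient U (q t) - γ • p t) (Set.Icc a b) t) →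
      (U (q b) - c) + (1/2) * (inner ℝ (p b) (matCLM M (p b)) : ℝ) ≤
        2 * ((U (q a) - c) + (1/2) * (inner ℝ (p a) (matCLM M (p a)) : ℝ)) *
          Real.exp (-lam0 * (b - a)) := by
  obtain ⟨α, hα, hαle⟩ := posdef_lower hd hMpd
  have hϖ0 : 0 ≤ ϖ := le_trans (norm_nonneg _) (hhess 0)
  obtain ⟨β, hβpos, hβ1, hβ2⟩ : ∃ β : ℝ, 0 < β ∧
      (∀ y : EuclideanSpace ℝ (Fin d), ‖matCLM M y‖ ≤ β * ‖y‖) ∧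
      (∀ y : EuclideanSpace ℝ (Fin d), (inner ℝ y (matCLM M y) : ℝ) ≤ β * ‖y‖^2) := by
    refine ⟨‖matCLM M‖ + 1, by positivity, fun y => ?_, fun y => ?_⟩
    · calc ‖matCLM M y‖ ≤ ‖matCLM M‖ * ‖y‖ := (matCLM M).le_opNorm y
        _ ≤ (‖matCLM M‖ + 1) * ‖y‖ :=
          mul_le_mul_of_nonneg_right (by linarith) (norm_nonneg y)
    · calc (inner ℝ y (matCLM M y) : ℝ) ≤ ‖y‖ * ‖matCLM M y‖ := real_inner_le_norm _ _
        _ ≤ ‖y‖ * (‖matCLM M‖ * ‖y‖) :=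
          mul_le_mul_of_nonneg_left ((matCLM M).le_opNorm y) (norm_nonneg y)
        _ ≤ (‖matCLM M‖ + 1) * ‖y‖^2 := by nlinarith [norm_nonneg y, sq_nonneg ‖y‖]
  obtain ⟨ε, hε, hε1, hε2, hε3⟩ : ∃ ε : ℝ, 0 < ε ∧
      ε * (ϖ*β + γ^2/2 + 1) ≤ γ*α/2 ∧ ε*κ ≤ 1/4 ∧ ε ≤ α/4 := by
    have hXpos : (0:ℝ) < ϖ*β + γ^2/2 + 1 := by positivity
    refine ⟨min (min (γ*α/(2*(ϖ*β + γ^2/2 + 1))) (1/(4*κ))) (α/4),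
      lt_min (lt_min (by positivity) (by positivity)) (by positivity), ?_, ?_, min_le_right _ _⟩
    · have h1 : min (min (γ*α/(2*(ϖ*β + γ^2/2 + 1))) (1/(4*κ))) (α/4) ≤
          γ*α/(2*(ϖ*β + γ^2/2 + 1)) := le_trans (min_le_left _ _) (min_le_left _ _)
      have h2 : γ*α/(2*(ϖ*β + γ^2/2 + 1))*(ϖ*β + γ^2/2 + 1) = γ*α/2 := by
        field_simp; try ring
      have h3 := mul_le_mul_of_nonneg_right h1 hXpos.le
      linarith
    · have h1 : min (min (γ*α/(2*(ϖ*β + γ^2/2 + 1))) (1/(4*κ))) (α/4) ≤ 1/(4*κ) :=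
        le_trans (min_le_left _ _) (min_le_right _ _)
      have h2 : 1/(4*κ)*κ = 1/4 := by field_simp; try ring
      have h3 := mul_le_mul_of_nonneg_right h1 hκ.le
      linarith
  obtain ⟨lam1, hlam1, hlam1a, hlam1b⟩ : ∃ l : ℝ, 0 < l ∧ l ≤ γ*α/β ∧ l ≤ ε*μ/2 :=
    ⟨min (γ*α/β) (ε*μ/2), lt_min (by positivity) (by positivity),
      min_le_left _ _, min_le_right _ _⟩
  refine ⟨(4/5)*lam1, by positivity, ?_⟩
  intro a b hab q p hq hp
  have hUdiff : Differentiable ℝ U := hU.differentiable (by norm_num)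
  have hgd : Differentiable ℝ (gradient U) := (contDiff_gradient hU).differentiable one_ne_zero
  set Lc : ℝ → ℝ := fun t =>
    ((U (q t) - c) + (1/2) * (inner ℝ (p t) (matCLM M (p t)) : ℝ)) +
      ε * (inner ℝ (gradient U (q t)) (p t) : ℝ) with hLc
  set Lc' : ℝ → ℝ := fun t =>
    -γ * (inner ℝ (p t) (matCLM M (p t)) : ℝ) +
      ε * ((inner ℝ ((fderiv ℝ (gradient U) (q t)) (matCLM M (p t))) (p t) : ℝ)
        - ‖gradient U (q t)‖^2 - γ * (inner ℝ (gradient U (q t)) (p t) : ℝ)) with hLc'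
  have hLd : ∀ t ∈ Set.Icc a b, HasDerivWithinAt Lc (Lc' t) (Set.Icc a b) t := by
    intro t ht
    have hqt := hq t ht
    have hpt := hp t ht
    have h1 : HasDerivWithinAt (fun s => U (q s))
        ((inner ℝ (gradient U (q t)) (matCLM M (p t)) : ℝ)) (Set.Icc a b) t := by
      have h := (hUdiff (q t)).hasFDerivAt.comp_hasDerivWithinAt t hqt
      rw [fderiv_apply_eq_inner_gradient] at h
      exact h
    have hNp : HasDerivWithinAt (fun s => matCLM M (p s))
        (matCLM M (-gradient U (q t) - γ • p t)) (Set.Icc a b) t :=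
      (matCLM M).hasFDerivAt.comp_hasDerivWithinAt t hpt
    have h2 : HasDerivWithinAt (fun s => (inner ℝ (p s) (matCLM M (p s)) : ℝ))
        ((inner ℝ (p t) (matCLM M (-gradient U (q t) - γ • p t)) : ℝ) +
          (inner ℝ (-gradient U (q t) - γ • p t) (matCLM M (p t)) : ℝ)) (Set.Icc a b) t :=
      hpt.inner ℝ hNp
    have hGq : HasDerivWithinAt (fun s => gradient U (q s))
        ((fderiv ℝ (gradient U) (q t)) (matCLM M (p t))) (Set.Icc a b) t :=
      (hgd (q t)).hasFDerivAt.comp_hasDerivWithinAt t hqt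
    have h3 : HasDerivWithinAt (fun s => (inner ℝ (gradient U (q s)) (p s) : ℝ))
        ((inner ℝ (gradient U (q t)) (-gradient U (q t) - γ • p t) : ℝ) +
          (inner ℝ ((fderiv ℝ (gradient U) (q t)) (matCLM M (p t))) (p t) : ℝ))
        (Set.Icc a b) t :=
      hGq.inner ℝ hpt
    have htot := ((h1.sub_const c).add (h2.const_mul ((1:ℝ)/2))).add (h3.const_mul ε)
    have hv1 : (inner ℝ (p t) (matCLM M (-gradient U (q t) - γ • p t)) : ℝ) =
        inner ℝ (-gradient U (q t) - γ • p t) (matCLM M (p t)) := by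
      rw [← matCLM_symm hMs (p t) (-gradient U (q t) - γ • p t)]
      exact real_inner_comm _ _
    have hv2 : (inner ℝ (-gradient U (q t) - γ • p t) (matCLM M (p t)) : ℝ) =
        -(inner ℝ (gradient U (q t)) (matCLM M (p t)) : ℝ)
          - γ * (inner ℝ (p t) (matCLM M (p t)) : ℝ) := by
      rw [inner_sub_left, inner_neg_left, real_inner_smul_left]
    have hv3 : (inner ℝ (gradient U (q t)) (-gradient U (q t) - γ • p t) : ℝ) =
        -‖gradient U (q t)‖^2 - γ * (inner ℝ (gradient U (q t)) (p t) : ℝ) := by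
      rw [inner_sub_right, inner_neg_right, real_inner_smul_right,
        real_inner_self_eq_norm_sq]
    have heq : (inner ℝ (gradient U (q t)) (matCLM M (p t)) : ℝ) +
        (1:ℝ)/2 * ((inner ℝ (p t) (matCLM M (-gradient U (q t) - γ • p t)) : ℝ) +
          (inner ℝ (-gradient U (q t) - γ • p t) (matCLM M (p t)) : ℝ)) +
        ε * ((inner ℝ (gradient U (q t)) (-gradient U (q t) - γ • p t) : ℝ) +
          (inner ℝ ((fderiv ℝ (gradient U) (q t)) (matCLM M (p t))) (p t) : ℝ)) = Lc' t := by
      rw [hv1, hv2, hv3, hLc']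
      ring
    rw [heq] at htot
    exact htot
  have hle : ∀ t ∈ Set.Icc a b, Lc' t ≤ -((4/5)*lam1) * Lc t := by
    intro t ht
    have hDb : (inner ℝ ((fderiv ℝ (gradient U) (q t)) (matCLM M (p t))) (p t) : ℝ) ≤
        ϖ * β * ‖p t‖^2 := by
      have h1 := real_inner_le_norm ((fderiv ℝ (gradient U) (q t)) (matCLM M (p t))) (p t)
      have h2 := (fderiv ℝ (gradient U) (q t)).le_opNorm (matCLM M (p t))
      have h5 : ‖(fderiv ℝ (gradient U) (q t)) (matCLM M (p t))‖ ≤ ϖ * (β * ‖p t‖) :=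
        le_trans h2 (mul_le_mul (hhess (q t)) (hβ1 (p t)) (norm_nonneg _) hϖ0)
      nlinarith [norm_nonneg (p t),
        norm_nonneg ((fderiv ℝ (gradient U) (q t)) (matCLM M (p t)))]
    exact scalar_key hγ hα hβpos hε hμ hϖ0 hκ hε1 hε2 hε3 hlam1a hlam1b hlam1 rfl
      (norm_nonneg _) (norm_nonneg _) (by linarith [hc (q t)]) (hαle (p t)) (hβ2 (p t))
      (abs_real_inner_le_norm _ _) (hPL (q t)) hDb
      (descent_lemma hU hκ hlip hc (q t))
  have gron := decay_of_deriv_le hab hLd hle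
  have hcmpb : |ε * (inner ℝ (gradient U (q b)) (p b) : ℝ)| ≤
      (1/4) * ((U (q b) - c) + (1/2) * (inner ℝ (p b) (matCLM M (p b)) : ℝ)) :=
    scalar_cmp hε hε2 hε3 (norm_nonneg _) (norm_nonneg _) (by linarith [hc (q b)])
      (descent_lemma hU hκ hlip hc (q b)) (hαle (p b)) (abs_real_inner_le_norm _ _)
  have hcmpa : |ε * (inner ℝ (gradient U (q a)) (p a) : ℝ)| ≤
      (1/4) * ((U (q a) - c) + (1/2) * (inner ℝ (p a) (matCLM M (p a)) : ℝ)) :=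
    scalar_cmp hε hε2 hε3 (norm_nonneg _) (norm_nonneg _) (by linarith [hc (q a)])
      (descent_lemma hU hκ hlip hc (q a)) (hαle (p a)) (abs_real_inner_le_norm _ _)
  have habsb := abs_le.mp hcmpb
  have habsa := abs_le.mp hcmpa
  have hQa0 : (0:ℝ) ≤ inner ℝ (p a) (matCLM M (p a)) := le_trans (by positivity) (hαle (p a))
  have hHa0 : (0:ℝ) ≤ (U (q a) - c) + (1/2) * (inner ℝ (p a) (matCLM M (p a)) : ℝ) := by
    have := hc (q a); linarith
  have hepos := (Real.exp_pos (-((4/5)*lam1) * (b - a))).le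
  have hLa : Lc a ≤ (5/4) * ((U (q a) - c) + (1/2) * (inner ℝ (p a) (matCLM M (p a)) : ℝ)) := by
    rw [hLc]; dsimp only; linarith [habsa.2]
  have hLb : (3/4) * ((U (q b) - c) + (1/2) * (inner ℝ (p b) (matCLM M (p b)) : ℝ)) ≤ Lc b := by
    rw [hLc]; dsimp only; linarith [habsb.1]
  have hmul := mul_le_mul_of_nonneg_right hLa hepos
  have hfin : Lc a * Real.exp (-((4/5)*lam1) * (b - a)) ≤
      (5/4) * (((U (q a) - c) + (1/2) * (inner ℝ (p a) (matCLM M (p a)) : ℝ)) *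
        Real.exp (-((4/5)*lam1) * (b - a))) := by linarith [hmul]
  have hprod : (0:ℝ) ≤ ((U (q a) - c) + (1/2) * (inner ℝ (p a) (matCLM M (p a)) : ℝ)) *
      Real.exp (-((4/5)*lam1) * (b - a)) := mul_nonneg hHa0 hepos
  nlinarith [gron, hLb, hfin, hprod]

lemma inner_matCLM_dot {d : ℕ} (M : Matrix (Fin d) (Fin d) ℝ) (y : EuclideanSpace ℝ (Fin d)) :
    (inner ℝ y (matCLM M y) : ℝ) = y ⬝ᵥ mvec M y := by
  rw [inner_eq_dot, matCLM_apply]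

/-- **Bound on energy drift.** Suppose `U` is `C²` with Lipschitz
gradient, Hessian uniformly bounded in operator norm by `ϖ`, coercive, Morse, and
satisfying the Polyak–Łojasiewicz condition with constant `μ > 0`. Then there exists
`λ > 0`, depending only on `U`, `Σ`, and `γ`, such that for every `T > 0` and every
curve `z` following the amplifying (repelling) dynamics on `[0, T/2]` and the conformal
(attracting) dynamics on `[T/2, T]`, the energy drift satisfies
`|H(z(T)) − H(z(0))| ≤ (inf_{u,v ∈ S} |2H(z(T/2)) − H(u) − H(v)|) e^{−λT/2}
  + sup_{u,v ∈ S} |H(u) − H(v)|`. -/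
theorem rahmc_energy_drift_bound
    (d : ℕ) (hd : 1 ≤ d) (γ : ℝ) (hγ : 0 < γ)
    (U : EuclideanSpace ℝ (Fin d) → ℝ) (hU : ContDiff ℝ 2 U)
    (K : NNReal) (hlip : LipschitzWith K (gradient U))
    (ϖ : ℝ) (hhess : ∀ x : EuclideanSpace ℝ (Fin d), ‖fderiv ℝ (gradient U) x‖ ≤ ϖ)
    (hcoercive : Filter.Tendsto U (Filter.comap (fun q => ‖q‖) Filter.atTop) Filter.atTop)
    (hmorse : ∀ q : EuclideanSpace ℝ (Fin d), gradient U q = 0 →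
      Function.Bijective (fderiv ℝ (gradient U) q))
    (μ : ℝ) (hμ : 0 < μ)
    (hPL : ∀ q qstar : EuclideanSpace ℝ (Fin d), gradient U qstar = 0 →
      μ * (U q - U qstar) ≤ ‖gradient U q‖ ^ 2)
    (S : Matrix (Fin d) (Fin d) ℝ) (hSsymm : S.IsSymm) (hSpd : S.PosDef) :
    ∃ lam > (0 : ℝ),
      ∀ T : ℝ, 0 < T →
      ∀ z : ℝ → EuclideanSpace ℝ (Fin d) × EuclideanSpace ℝ (Fin d),
        (∀ t ∈ Set.Icc (0 : ℝ) (T / 2),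
          HasDerivWithinAt (fun t => (z t).1) (mvec S⁻¹ (z t).2)
            (Set.Icc (0 : ℝ) (T / 2)) t ∧
          HasDerivWithinAt (fun t => (z t).2) (-gradient U (z t).1 + γ • (z t).2)
            (Set.Icc (0 : ℝ) (T / 2)) t) →
        (∀ t ∈ Set.Icc (T / 2) T,
          HasDerivWithinAt (fun t => (z t).1) (mvec S⁻¹ (z t).2)
            (Set.Icc (T / 2) T) t ∧
          HasDerivWithinAt (fun t => (z t).2) (-gradient U (z t).1 - γ • (z t).2)
            (Set.Icc (T / 2) T) t) →
        |Ham U S⁻¹ (z T).1 (z T).2 - Ham U S⁻¹ (z 0).1 (z 0).2| ≤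
          sInf ((fun uv :
              (EuclideanSpace ℝ (Fin d) × EuclideanSpace ℝ (Fin d)) ×
                (EuclideanSpace ℝ (Fin d) × EuclideanSpace ℝ (Fin d)) =>
            |2 * Ham U S⁻¹ (z (T / 2)).1 (z (T / 2)).2 -
              Ham U S⁻¹ uv.1.1 uv.1.2 - Ham U S⁻¹ uv.2.1 uv.2.2|) ''
              (critSet U ×ˢ critSet U)) * Real.exp (-lam * T / 2) +
          sSup ((fun uv :
              (EuclideanSpace ℝ (Fin d) × EuclideanSpace ℝ (Fin d)) ×
                (EuclideanSpace ℝ (Fin d) × EuclideanSpace ℝ (Fin d)) =>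
            |Ham U S⁻¹ uv.1.1 uv.1.2 - Ham U S⁻¹ uv.2.1 uv.2.2|) ''
              (critSet U ×ˢ critSet U)) := by
  classical
  have hκ : (0:ℝ) < (K:ℝ) + 1 := by positivity
  have hlipR : ∀ x y : EuclideanSpace ℝ (Fin d),
      ‖gradient U x - gradient U y‖ ≤ ((K:ℝ) + 1) * ‖x - y‖ := by
    intro x y
    have h := hlip.dist_le_mul x y
    rw [dist_eq_norm, dist_eq_norm] at h
    have h2 : (K:ℝ) * ‖x - y‖ ≤ ((K:ℝ)+1) * ‖x - y‖ :=
      mul_le_mul_of_nonneg_right (by linarith) (norm_nonneg _)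
    linarith
  have hcoc : Filter.Tendsto U (Filter.cocompact _) Filter.atTop :=
    hcoercive.mono_left (Filter.tendsto_iff_comap.mp tendsto_norm_cocompact_atTop)
  obtain ⟨x₀, hx₀⟩ := hU.continuous.exists_forall_le hcoc
  have hgrad0 : gradient U x₀ = 0 := by
    have hmin : IsLocalMin U x₀ := Filter.Eventually.of_forall (fun y => hx₀ y)
    have hfd : fderiv ℝ U x₀ = 0 := hmin.fderiv_eq_zero
    show (InnerProductSpace.toDual ℝ _).symm (fderiv ℝ U x₀) = 0
    rw [hfd]; simp
  have hc : ∀ y, U x₀ ≤ U y := hx₀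
  have hPL' : ∀ q, μ * (U q - U x₀) ≤ ‖gradient U q‖^2 := fun q => hPL q x₀ hgrad0
  have hMs : (S⁻¹).IsSymm := by
    show (S⁻¹)ᵀ = S⁻¹
    rw [Matrix.transpose_nonsing_inv, hSsymm.eq]
  have hMpd : (S⁻¹).PosDef := hSpd.inv
  obtain ⟨lam0, hlam0, hdecay⟩ := decay_exists hd hγ hU hκ hlipR hhess hμ hMs hMpd hc hPL'
  refine ⟨lam0, hlam0, ?_⟩
  intro T hT z hz1 hz2
  have hQ0 : ∀ y : EuclideanSpace ℝ (Fin d), (0:ℝ) ≤ y ⬝ᵥ mvec S⁻¹ y := by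
    intro y
    rcases eq_or_ne y 0 with rfl | hy
    · rw [← inner_matCLM_dot]; simp
    · rw [← inner_matCLM_dot]; exact (posdef_dot_pos hMpd hy).le
  -- every critical point has Hamiltonian value U x₀
  have hcrit : ∀ w ∈ critSet U, Ham U S⁻¹ w.1 w.2 = U x₀ := by
    intro w hw
    obtain ⟨hw1, hw2⟩ := hw
    have hham : Ham U S⁻¹ w.1 w.2 = U w.1 := by
      rw [Ham, hw2]
      have h0 : ((0 : EuclideanSpace ℝ (Fin d)) ⬝ᵥ mvec S⁻¹ 0) = 0 := by
        simp [mvec]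
      rw [h0]; ring
    have hle1 : U w.1 ≤ U x₀ := by
      have h := hPL w.1 x₀ hgrad0
      rw [hw1] at h
      simp at h
      nlinarith
    have := hc w.1
    linarith [hham, hle1, this]
  have hcritmem : ((x₀, (0 : EuclideanSpace ℝ (Fin d))) ∈ critSet U) := ⟨hgrad0, rfl⟩
  set c := U x₀ with hcdef
  set HB := Ham U S⁻¹ (z (T/2)).1 (z (T/2)).2 with hHB
  -- evaluate the inf and sup
  have himg1 : (fun uv :
      (EuclideanSpace ℝ (Fin d) × EuclideanSpace ℝ (Fin d)) ×
        (EuclideanSpace ℝ (Fin d) × EuclideanSpace ℝ (Fin d)) =>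
      |2 * HB - Ham U S⁻¹ uv.1.1 uv.1.2 - Ham U S⁻¹ uv.2.1 uv.2.2|) ''
      (critSet U ×ˢ critSet U) = {|2*HB - 2*c|} := by
    ext r
    constructor
    · rintro ⟨⟨u, v⟩, ⟨hu, hv⟩, rfl⟩
      rw [Set.mem_singleton_iff]
      dsimp only
      rw [hcrit u hu, hcrit v hv]
      ring_nf
    · rintro rfl
      refine ⟨((x₀, 0), (x₀, 0)), ⟨hcritmem, hcritmem⟩, ?_⟩
      dsimp only
      rw [hcrit _ hcritmem]
      ring_nf
  have himg2 : (fun uv :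
      (EuclideanSpace ℝ (Fin d) × EuclideanSpace ℝ (Fin d)) ×
        (EuclideanSpace ℝ (Fin d) × EuclideanSpace ℝ (Fin d)) =>
      |Ham U S⁻¹ uv.1.1 uv.1.2 - Ham U S⁻¹ uv.2.1 uv.2.2|) ''
      (critSet U ×ˢ critSet U) = {(0:ℝ)} := by
    ext r
    constructor
    · rintro ⟨⟨u, v⟩, ⟨hu, hv⟩, rfl⟩
      rw [Set.mem_singleton_iff]
      dsimp only
      rw [hcrit u hu, hcrit v hv]
      simp
    · rintro rfl
      refine ⟨((x₀, 0), (x₀, 0)), ⟨hcritmem, hcritmem⟩, ?_⟩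
      dsimp only
      rw [hcrit _ hcritmem]
      simp
  rw [himg1, himg2, csInf_singleton, csSup_singleton]
  -- decay on the second half
  have hdec2 := hdecay (T/2) T (by linarith) (fun t => (z t).1) (fun t => (z t).2)
    (fun t ht => (hz2 t ht).1) (fun t ht => (hz2 t ht).2)
  simp only [inner_matCLM_dot] at hdec2
  -- time reversal of the first half
  have hmaps : Set.MapsTo (fun s : ℝ => T/2 - s) (Set.Icc 0 (T/2)) (Set.Icc 0 (T/2)) := by
    intro s hs
    rw [Set.mem_Icc] at *
    constructor <;> linarith [hs.1, hs.2]
  have hqw : ∀ t ∈ Set.Icc (0:ℝ) (T/2),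
      HasDerivWithinAt (fun s => (z (T/2 - s)).1) (mvec S⁻¹ (-(z (T/2 - t)).2))
        (Set.Icc (0:ℝ) (T/2)) t := by
    intro t ht
    have htm : T/2 - t ∈ Set.Icc (0:ℝ) (T/2) := hmaps ht
    have hr : HasDerivWithinAt (fun s : ℝ => T/2 - s) (-1) (Set.Icc (0:ℝ) (T/2)) t := by
      simpa using (hasDerivWithinAt_id t (Set.Icc (0:ℝ) (T/2))).const_sub (T/2)
    have hcomp := HasDerivWithinAt.scomp t ((hz1 (T/2 - t) htm).1) hr hmaps
    have heq : ((-1:ℝ) • mvec S⁻¹ ((z (T/2 - t)).2)) = mvec S⁻¹ (-(z (T/2 - t)).2) := by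
      show ((-1:ℝ) • WithLp.toLp 2 (S⁻¹.mulVec ((z (T/2 - t)).2))) = WithLp.toLp 2 (S⁻¹.mulVec (-(z (T/2 - t)).2))
      rw [Matrix.mulVec_neg, WithLp.toLp_neg]
      exact neg_one_smul ℝ _
    rw [heq] at hcomp
    exact hcomp
  have hpw : ∀ t ∈ Set.Icc (0:ℝ) (T/2),
      HasDerivWithinAt (fun s => -(z (T/2 - s)).2)
        (-gradient U ((z (T/2 - t)).1) - γ • (-(z (T/2 - t)).2))
        (Set.Icc (0:ℝ) (T/2)) t := by
    intro t ht
    have htm : T/2 - t ∈ Set.Icc (0:ℝ) (T/2) := hmaps ht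
    have hr : HasDerivWithinAt (fun s : ℝ => T/2 - s) (-1) (Set.Icc (0:ℝ) (T/2)) t := by
      simpa using (hasDerivWithinAt_id t (Set.Icc (0:ℝ) (T/2))).const_sub (T/2)
    have hcomp := (HasDerivWithinAt.scomp t ((hz1 (T/2 - t) htm).2) hr hmaps).neg
    have heq : -((-1:ℝ) • (-gradient U ((z (T/2 - t)).1) + γ • (z (T/2 - t)).2)) =
        -gradient U ((z (T/2 - t)).1) - γ • (-(z (T/2 - t)).2) := by
      rw [neg_one_smul]
      rw [smul_neg]
      abel
    rw [heq] at hcomp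
    exact hcomp
  have hdec1 := hdecay 0 (T/2) (by linarith) (fun s => (z (T/2 - s)).1)
    (fun s => -(z (T/2 - s)).2) hqw hpw
  simp only [inner_matCLM_dot] at hdec1
  have hzero : (T:ℝ)/2 - T/2 = 0 := by ring
  have hTsub : (T:ℝ)/2 - 0 = T/2 := by ring
  rw [hzero, hTsub] at hdec1
  -- evenness of the quadratic form
  have heven : ∀ y : EuclideanSpace ℝ (Fin d), ((-y) ⬝ᵥ mvec S⁻¹ (-y)) = y ⬝ᵥ mvec S⁻¹ y := by
    intro y
    show ((-y) ⬝ᵥ S⁻¹.mulVec (-y)) = y ⬝ᵥ S⁻¹.mulVec y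
    rw [Matrix.mulVec_neg, WithLp.ofLp_neg, neg_dotProduct, dotProduct_neg, neg_neg]
  rw [heven, heven] at hdec1
  -- translate to Hamiltonian values
  set HA := Ham U S⁻¹ (z 0).1 (z 0).2 with hHA
  set HC := Ham U S⁻¹ (z T).1 (z T).2 with hHC
  have hAform : HA = U (z 0).1 + (1/2) * ((z 0).2 ⬝ᵥ mvec S⁻¹ (z 0).2) := rfl
  have hBform : HB = U (z (T/2)).1 + (1/2) * ((z (T/2)).2 ⬝ᵥ mvec S⁻¹ (z (T/2)).2) := rfl
  have hCform : HC = U (z T).1 + (1/2) * ((z T).2 ⬝ᵥ mvec S⁻¹ (z T).2) := rfl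
  have hexp1 : Real.exp (-lam0 * (T - T/2)) = Real.exp (-lam0 * T / 2) := by
    congr 1; ring
  have hexp2 : Real.exp (-lam0 * (T/2)) = Real.exp (-lam0 * T / 2) := by
    congr 1; ring
  rw [hexp1] at hdec2
  rw [hexp2] at hdec1
  have hepos := (Real.exp_pos (-lam0 * T / 2)).le
  have hA0 : c ≤ HA := by
    rw [hAform]; have := hc (z 0).1; have := hQ0 (z 0).2; linarith
  have hC0 : c ≤ HC := by
    rw [hCform]; have := hc (z T).1; have := hQ0 (z T).2; linarith
  have hB0 : c ≤ HB := by
    rw [hBform]; have := hc (z (T/2)).1; have := hQ0 (z (T/2)).2; linarith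
  have habs : |2*HB - 2*c| = 2*(HB - c) := by
    rw [abs_of_nonneg]; ring
    linarith
  rw [habs]
  have hC : HC - c ≤ 2*(HB - c) * Real.exp (-lam0 * T / 2) := by
    rw [hCform, hBform]; linarith [hdec2]
  have hA : HA - c ≤ 2*(HB - c) * Real.exp (-lam0 * T / 2) := by
    rw [hAform, hBform]; linarith [hdec1]
  rw [abs_sub_le_iff]
  constructor <;> linarith
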